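/- Let X be a Banach space and let (A_m)_{m∈ℤ} be a sequence of bounded linear operators on X admitting an exponential trichotomy with constants C, λ > 0. Then the linear system x_{n+1} = A_n x_n has the ℓ^∞-Lipschitz shadowing property: for every ε > 0 and every sequence (y_n)_{n∈ℤ} ⊂ X with sup_{n∈ℤ} ‖y_{n+1} − A_n y_n‖ ≤ ε(1−e^{−λ})/(2C(1+e^{−λ})), there exists a sequence (x_n)_{n∈ℤ} with x_{n+1} = A_n x_n for all n ∈ ℤ and sup_{n∈ℤ} ‖x_n − y_n‖ ≤ ε. -/

import Mathlib

open scoped ENNReal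

/-- The forward products `𝒜(m,n) = A_{m-1} ⋯ A_n` (equal to the identity when `m ≤ n`). -/
noncomputable def calA {X : Type*} [NormedAddCommGroup X] [NormedSpace ℝ X]
    (A : ℤ → X →L[ℝ] X) (m n : ℤ) : X →L[ℝ] X :=
  (List.range (m - n).toNat).foldl (fun B k => (A (n + (k : ℤ))).comp B)
    (ContinuousLinearMap.id ℝ X)

/-- The sequence `(A_m)_{m ∈ ℤ}` admits an exponential trichotomy with constants `C, lam > 0`.
The projections are `P 0 = P¹` (stable), `P 1 = P²` (unstable) and `P 2 = P³` (central).
For `m ≤ n`, the operator `𝒜(m,n)` (the inverse of `𝒜(n,m)` restricted to `Ker P¹_m`)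
is described implicitly: `w = 𝒜(m,n) P^i_n x` iff `w ∈ Ker P¹_m` and `𝒜(n,m) w = P^i_n x`. -/
def ExpTrichotomy {X : Type*} [NormedAddCommGroup X] [NormedSpace ℝ X]
    (A : ℤ → X →L[ℝ] X) (C lam : ℝ) : Prop :=
  ∃ P : Fin 3 → ℤ → X →L[ℝ] X,
    (∀ m, P 0 m + P 1 m + P 2 m = ContinuousLinearMap.id ℝ X) ∧
    (∀ i m, (P i m).comp (P i m) = P i m) ∧
    (∀ i j m, i ≠ j → (P i m).comp (P j m) = 0) ∧
    (∀ i m, (P i (m + 1)).comp (A m) = (A m).comp (P i m)) ∧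
    (∀ m, Set.BijOn (A m) (LinearMap.ker (P 0 m : X →ₗ[ℝ] X) : Set X)
      (LinearMap.ker (P 0 (m + 1) : X →ₗ[ℝ] X) : Set X)) ∧
    (∀ m n : ℤ, n ≤ m → ‖(calA A m n).comp (P 0 n)‖ ≤ C * Real.exp (-lam * (m - n))) ∧
    (∀ m n : ℤ, m ≤ n → ∀ x w : X, w ∈ LinearMap.ker (P 0 m : X →ₗ[ℝ] X) →
      calA A n m w = P 1 n x → ‖w‖ ≤ C * Real.exp (-lam * (n - m)) * ‖x‖) ∧
    (∀ m n : ℤ, n ≤ m → ‖(calA A m n).comp (P 2 n)‖ ≤ C * Real.exp (-lam * (m - n))) ∧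
    (∀ m n : ℤ, m ≤ n → ∀ x w : X, w ∈ LinearMap.ker (P 0 m : X →ₗ[ℝ] X) →
      calA A n m w = P 2 n x → ‖w‖ ≤ C * Real.exp (-lam * (n - m)) * ‖x‖)

section Helpers

variable {X : Type*} [NormedAddCommGroup X] [NormedSpace ℝ X]

lemma calA_self (A : ℤ → X →L[ℝ] X) (n : ℤ) :
    calA A n n = ContinuousLinearMap.id ℝ X := by
  simp [calA]

lemma calA_succ (A : ℤ → X →L[ℝ] X) {m j : ℤ} (h : j ≤ m) :
    calA A (m + 1) j = (A m).comp (calA A m j) := by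
  have h1 : (m + 1 - j).toNat = (m - j).toNat + 1 := by omega
  have h2 : j + ((m - j).toNat : ℤ) = m := by omega
  unfold calA
  rw [h1, List.range_succ]
  simp only [List.flatMap_append, List.flatMap_cons, List.flatMap_nil, List.bind_eq_flatMap,
    List.foldl_append, List.foldl_cons, List.foldl_nil, List.pure_def]
  rw [h2]

lemma calA_one (A : ℤ → X →L[ℝ] X) (m : ℤ) (x : X) :
    calA A (m + 1) m x = A m x := by
  rw [calA_succ A (le_refl m), calA_self]
  rfl

lemma calA_step (A : ℤ → X →L[ℝ] X) {m : ℤ} (x : X) :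
    ∀ n : ℤ, m + 1 ≤ n → calA A n (m + 1) (A m x) = calA A n m x := by
  refine Int.le_induction ?_ ?_
  · rw [calA_self, calA_one]
    rfl
  · intro n hn ih
    rw [calA_succ A (by omega : m + 1 ≤ n), calA_succ A (by omega : m ≤ n)]
    simp only [ContinuousLinearMap.comp_apply]
    rw [ih]

lemma calA_bijOn (A : ℤ → X →L[ℝ] X) {P0 : ℤ → X →L[ℝ] X}
    (hbij : ∀ m, Set.BijOn (A m) (LinearMap.ker (P0 m : X →ₗ[ℝ] X) : Set X)
      (LinearMap.ker (P0 (m + 1) : X →ₗ[ℝ] X) : Set X)) (m : ℤ) :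
    ∀ n : ℤ, m ≤ n → Set.BijOn (calA A n m) (LinearMap.ker (P0 m : X →ₗ[ℝ] X) : Set X)
      (LinearMap.ker (P0 n : X →ₗ[ℝ] X) : Set X) := by
  refine Int.le_induction ?_ ?_
  · have : Set.BijOn id (LinearMap.ker (P0 m : X →ₗ[ℝ] X) : Set X)
        (LinearMap.ker (P0 m : X →ₗ[ℝ] X) : Set X) := Set.bijOn_id _
    refine Set.BijOn.congr this ?_
    intro x _
    rw [calA_self]
    rfl
  · intro n hn ih
    have hcomp := (hbij n).comp ih
    refine Set.BijOn.congr hcomp ?_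
    intro x _
    rw [calA_succ A hn]
    rfl

end Helpers

/-- If `(A_m)_{m∈ℤ}` admits an exponential trichotomy with constants `C, lam > 0`, then the
linear system `x_{n+1} = A_n x_n` has the `ℓ^∞`-Lipschitz shadowing property with constant
`L = (1-e^{-lam})/(2C(1+e^{-lam}))`. -/
theorem trichotomy_linear_lipschitz_shadowing
    {X : Type*} [NormedAddCommGroup X] [NormedSpace ℝ X] [CompleteSpace X]
    (A : ℤ → X →L[ℝ] X) (C lam : ℝ) (hC : 0 < C) (hlam : 0 < lam)
    (h : ExpTrichotomy A C lam) :
    ∀ ε : ℝ, 0 < ε → ∀ y : ℤ → X,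
      (∀ n : ℤ, ‖y (n + 1) - A n (y n)‖
        ≤ ε * (1 - Real.exp (-lam)) / (2 * C * (1 + Real.exp (-lam)))) →
      ∃ x : ℤ → X, (∀ n : ℤ, x (n + 1) = A n (x n)) ∧
        ∀ n : ℤ, ‖x n - y n‖ ≤ ε := by
  obtain ⟨P, hPsum, hidem, horth, hcomm, hbijA, h6, h7, h8, h9⟩ := h
  intro ε hε y hy
  set q : ℝ := Real.exp (-lam) with hqdef
  have hq0 : 0 < q := Real.exp_pos _
  have hq1 : q < 1 := by
    rw [hqdef, Real.exp_lt_one_iff]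
    linarith
  set δ : ℝ := ε * (1 - q) / (2 * C * (1 + q)) with hδdef
  have hδ0 : 0 < δ := by
    apply div_pos
    · exact mul_pos hε (by linarith)
    · nlinarith
  set z : ℤ → X := fun n => y (n + 1) - A n (y n) with hzdef
  have hyz : ∀ n, ‖z n‖ ≤ δ := by
    intro n
    simp only [hzdef]
    exact hy n
  have hinj : ∀ m n : ℤ, m ≤ n →
      Set.InjOn (calA A n m) (LinearMap.ker (P 0 m : X →ₗ[ℝ] X) : Set X) :=
    fun m n hmn => (calA_bijOn A hbijA m n hmn).injOn
  have hsurj : ∀ m n : ℤ, m ≤ n → ∀ v, v ∈ (LinearMap.ker (P 0 n : X →ₗ[ℝ] X) : Set X) →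
      ∃ w, w ∈ (LinearMap.ker (P 0 m : X →ₗ[ℝ] X) : Set X) ∧ calA A n m w = v := by
    intro m n hmn v hv
    obtain ⟨w, hw, hww⟩ := (calA_bijOn A hbijA m n hmn).surjOn hv
    exact ⟨w, hw, hww⟩
  choose W hWker hWeq using hsurj
  have hgeosum : Summable (fun k : ℕ => q ^ k) := summable_geometric_of_lt_one hq0.le hq1
  -- the forward sum
  set f : ℤ → ℕ → X := fun m k => calA A m (m - k) ((P 0 (m - k)) (z (m - 1 - k)))
    with hfdef
  have hfb : ∀ (m : ℤ) (k : ℕ), ‖f m k‖ ≤ C * δ * q ^ k := by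
    intro m k
    have h1 : ‖f m k‖ ≤ ‖(calA A m (m - k)).comp (P 0 (m - k))‖ * ‖z (m - 1 - k)‖ := by
      simp only [hfdef]
      exact ((calA A m (m - k)).comp (P 0 (m - k))).le_opNorm _
    have h2 := h6 m (m - k) (by omega)
    have h3 : Real.exp (-lam * ((m : ℝ) - ((m - (k : ℤ) : ℤ) : ℝ))) = q ^ k := by
      rw [hqdef, ← Real.exp_nat_mul]
      congr 1
      push_cast
      ring
    rw [h3] at h2
    calc ‖f m k‖ ≤ ‖(calA A m (m - k)).comp (P 0 (m - k))‖ * ‖z (m - 1 - k)‖ := h1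
      _ ≤ (C * q ^ k) * δ :=
        mul_le_mul h2 (hyz _) (norm_nonneg _)
          (mul_nonneg hC.le (pow_nonneg hq0.le _))
      _ = C * δ * q ^ k := by ring
  have hfgeo : Summable (fun k : ℕ => C * δ * q ^ k) := hgeosum.mul_left _
  have hfs : ∀ m, Summable (f m) := fun m => Summable.of_norm_bounded hfgeo (hfb m)
  have hFnorm : ∀ m, ‖∑' k, f m k‖ ≤ C * δ / (1 - q) := by
    intro m
    have h1 : Summable (fun k => ‖f m k‖) :=
      Summable.of_nonneg_of_le (fun _ => norm_nonneg _) (hfb m) hfgeo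
    calc ‖∑' k, f m k‖ ≤ ∑' k, ‖f m k‖ := norm_tsum_le_tsum_norm h1
      _ ≤ ∑' k : ℕ, C * δ * q ^ k := Summable.tsum_le_tsum (hfb m) h1 hfgeo
      _ = C * δ * (1 - q)⁻¹ := by
          rw [tsum_mul_left, tsum_geometric_of_lt_one hq0.le hq1]
      _ = C * δ / (1 - q) := (div_eq_mul_inv _ _).symm
  have hfshift : ∀ (m : ℤ) (k : ℕ), A m (f m k) = f (m + 1) (k + 1) := by
    intro m k
    simp only [hfdef]
    push_cast
    rw [show m + 1 - ((k : ℤ) + 1) = m - k by ring,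
      show m + 1 - 1 - ((k : ℤ) + 1) = m - 1 - k by ring,
      calA_succ A (by omega : m - (k : ℤ) ≤ m)]
    rfl
  have hf0 : ∀ m : ℤ, f (m + 1) 0 = (P 0 (m + 1)) (z m) := by
    intro m
    simp only [hfdef, Nat.cast_zero, sub_zero, add_sub_cancel_right, calA_self,
      ContinuousLinearMap.id_apply]
  have hFrec : ∀ m, A m (∑' k, f m k) = (∑' k, f (m + 1) k) - (P 0 (m + 1)) (z m) := by
    intro m
    rw [(A m).map_tsum (hfs m)]
    have h1 : ∑' k, A m (f m k) = ∑' k, f (m + 1) (k + 1) := tsum_congr (hfshift m)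
    have h2 : (∑' k, f (m + 1) k) = f (m + 1) 0 + ∑' k, f (m + 1) (k + 1) :=
      Summable.tsum_eq_zero_add (hfs (m + 1))
    rw [h1, h2, hf0 m]
    abel
  -- the backward sums
  have key : ∀ i : Fin 3, i ≠ 0 →
      (∀ m n : ℤ, m ≤ n → ∀ x w : X, w ∈ LinearMap.ker (P 0 m : X →ₗ[ℝ] X) →
        calA A n m w = P i n x → ‖w‖ ≤ C * Real.exp (-lam * (n - m)) * ‖x‖) →
      ∃ B : ℤ → X, (∀ m, ‖B m‖ ≤ C * δ * q / (1 - q)) ∧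
        (∀ m, A m (B m) = B (m + 1) + (P i (m + 1)) (z m)) := by
    intro i hi hb
    have hmem : ∀ (n : ℤ) (v : X), (P i n) v ∈ (LinearMap.ker (P 0 n : X →ₗ[ℝ] X) : Set X) := by
      intro n v
      have h0 := horth 0 i n (Ne.symm hi)
      have h1 : (P 0 n) ((P i n) v) = 0 := by
        rw [← ContinuousLinearMap.comp_apply, h0]
        rfl
      simpa [LinearMap.mem_ker] using h1
    set g : ℤ → ℕ → X := fun m k =>
      W m (m + k + 1) (by omega) ((P i (m + k + 1)) (z (m + k))) (hmem _ _) with hgdef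
    have hgker : ∀ m k, g m k ∈ (LinearMap.ker (P 0 m : X →ₗ[ℝ] X) : Set X) := by
      intro m k
      simp only [hgdef]
      exact hWker _ _ _ _ _
    have hgeq : ∀ (m : ℤ) (k : ℕ) (n : ℤ), n = m + k + 1 →
        calA A n m (g m k) = (P i n) (z (n - 1)) := by
      intro m k n hn
      subst hn
      rw [show m + (k : ℤ) + 1 - 1 = m + k by ring]
      simp only [hgdef]
      exact hWeq _ _ _ _ _
    have hgb : ∀ (m : ℤ) (k : ℕ), ‖g m k‖ ≤ C * δ * q * q ^ k := by
      intro m k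
      have he : calA A (m + k + 1) m (g m k) = (P i (m + k + 1)) (z (m + k)) := by
        have := hgeq m k (m + k + 1) rfl
        rwa [show m + (k : ℤ) + 1 - 1 = m + k by ring] at this
      have h1 := hb m (m + k + 1) (by omega) (z (m + k)) (g m k) (hgker m k) he
      have h2 : Real.exp (-lam * (((m + (k : ℤ) + 1 : ℤ) : ℝ) - (m : ℝ))) = q ^ (k + 1) := by
        rw [hqdef, ← Real.exp_nat_mul]
        congr 1
        push_cast
        ring
      rw [h2] at h1
      calc ‖g m k‖ ≤ C * q ^ (k + 1) * ‖z (m + k)‖ := h1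
        _ ≤ C * q ^ (k + 1) * δ :=
            mul_le_mul_of_nonneg_left (hyz _) (mul_nonneg hC.le (pow_nonneg hq0.le _))
        _ = C * δ * q * q ^ k := by rw [pow_succ]; ring
    have hggeo : Summable (fun k : ℕ => C * δ * q * q ^ k) := hgeosum.mul_left _
    have hgs : ∀ m, Summable (g m) := fun m => Summable.of_norm_bounded hggeo (hgb m)
    refine ⟨fun m => ∑' k, g m k, ?_, ?_⟩
    · intro m
      have h1 : Summable (fun k => ‖g m k‖) :=
        Summable.of_nonneg_of_le (fun _ => norm_nonneg _) (hgb m) hggeo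
      calc ‖∑' k, g m k‖ ≤ ∑' k, ‖g m k‖ := norm_tsum_le_tsum_norm h1
        _ ≤ ∑' k : ℕ, C * δ * q * q ^ k := Summable.tsum_le_tsum (hgb m) h1 hggeo
        _ = C * δ * q * (1 - q)⁻¹ := by
            rw [tsum_mul_left, tsum_geometric_of_lt_one hq0.le hq1]
        _ = C * δ * q / (1 - q) := (div_eq_mul_inv _ _).symm
    · intro m
      have hshift : ∀ k : ℕ, A m (g m (k + 1)) = g (m + 1) k := by
        intro k
        refine hinj (m + 1) (m + 1 + k + 1) (by omega)
          ((hbijA m).mapsTo (hgker m (k + 1))) (hgker (m + 1) k) ?_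
        rw [calA_step A (g m (k + 1)) (m + 1 + k + 1) (by omega),
          hgeq m (k + 1) (m + 1 + k + 1) (by push_cast; ring),
          hgeq (m + 1) k (m + 1 + k + 1) (by ring)]
      have hg0 : A m (g m 0) = (P i (m + 1)) (z m) := by
        have h1 := hgeq m 0 (m + 1) (by simp)
        rw [show (m + 1 - 1 : ℤ) = m by ring] at h1
        rw [← h1, calA_one]
      have hsum2 : Summable (fun k => A m (g m k)) :=
        ContinuousLinearMap.summable (A m) (hgs m)
      rw [(A m).map_tsum (hgs m), Summable.tsum_eq_zero_add hsum2, hg0]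
      have h3 : ∑' k, A m (g m (k + 1)) = ∑' k, g (m + 1) k := tsum_congr hshift
      rw [h3]
      abel
  obtain ⟨B1, hB1norm, hB1rec⟩ := key 1 (by decide) h7
  obtain ⟨B2, hB2norm, hB2rec⟩ := key 2 (by decide) h9
  refine ⟨fun n => y n + (-(∑' k, f n k) + (B1 n + B2 n)), ?_, ?_⟩
  · intro n
    have hz : (P 0 (n + 1)) (z n) + (P 1 (n + 1)) (z n) + (P 2 (n + 1)) (z n) = z n := by
      have h1 := DFunLike.congr_fun (hPsum (n + 1)) (z n)
      simpa using h1
    have hyy : y (n + 1) = A n (y n) + z n := by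
      simp only [hzdef]
      abel
    show y (n + 1) + (-(∑' k, f (n + 1) k) + (B1 (n + 1) + B2 (n + 1)))
        = A n (y n + (-(∑' k, f n k) + (B1 n + B2 n)))
    have expand : A n (y n + (-(∑' k, f n k) + (B1 n + B2 n)))
        = A n (y n) + (-((∑' k, f (n + 1) k) - (P 0 (n + 1)) (z n))
          + ((B1 (n + 1) + (P 1 (n + 1)) (z n)) + (B2 (n + 1) + (P 2 (n + 1)) (z n)))) := by
      rw [map_add, map_add, map_neg, map_add, hFrec n, hB1rec n, hB2rec n]
    rw [expand, hyy]
    set u0 := (P 0 (n + 1)) (z n) with hu0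
    set u1 := (P 1 (n + 1)) (z n) with hu1
    set u2 := (P 2 (n + 1)) (z n) with hu2
    rw [← hz]
    abel
  · intro n
    show ‖y n + (-(∑' k, f n k) + (B1 n + B2 n)) - y n‖ ≤ ε
    rw [add_sub_cancel_left]
    have h1 : ‖-(∑' k, f n k) + (B1 n + B2 n)‖
        ≤ C * δ / (1 - q) + (C * δ * q / (1 - q) + C * δ * q / (1 - q)) := by
      refine le_trans (norm_add_le _ _) (add_le_add ?_
        (le_trans (norm_add_le _ _) (add_le_add (hB1norm n) (hB2norm n))))
      rw [norm_neg]
      exact hFnorm n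
    refine h1.trans ?_
    have hq1' : 0 < 1 - q := by linarith
    have h2C : (0 : ℝ) < 2 * C * (1 + q) := by nlinarith
    have hδeq : δ * (2 * C * (1 + q)) = ε * (1 - q) := by
      rw [hδdef]
      exact div_mul_cancel₀ _ h2C.ne'
    rw [← add_div, ← add_div, div_le_iff₀ hq1']
    nlinarith [mul_pos hC hδ0, mul_pos (mul_pos hC hδ0) hq0]
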